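/- arXiv:2101.03956 — 6 statements merged into one kernel-verified Lean document; each statement's English description precedes it below -/
import Mathlib

section
/- Let X be a real Hilbert space, u ∈ X, and let X^δ ⊆ X^{ubar} be closed subspaces. Let u_δ and u_{ubar} denote the orthogonal projections (best approximations) of u onto X^δ and X^{ubar} respectively. Suppose there is a constant ζ < 1 with ‖u − u_{ubar}‖ ≤ ζ‖u − u_δ‖ (saturation). If w ∈ X^δ and v ∈ X^{ubar} satisfy ‖u_{ubar} − v‖ ≤ ρ‖u_{ubar} − w‖ for some ρ ≤ 1, then ‖u − v‖ ≤ sqrt(ζ² + ρ²(1 − ζ²)) · ‖u − w‖. -/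
open RealInnerProductSpace

theorem stmt_0 {X : Type*} [NormedAddCommGroup X] [InnerProductSpace ℝ X] [CompleteSpace X]
    (Kd Kub : Submodule ℝ X) (hclosed_d : IsClosed (Kd : Set X))
    (hclosed_ub : IsClosed (Kub : Set X)) (hsub : Kd ≤ Kub)
    (u ud uub : X) (hud : ud ∈ Kd) (huub : uub ∈ Kub)
    (hbest_d : ∀ w ∈ Kd, ‖u - ud‖ ≤ ‖u - w‖)
    (horth : ∀ w ∈ Kub, ⟪u - uub, w⟫ = 0)
    (ζ ρ : ℝ) (hζ0 : 0 ≤ ζ) (hζ1 : ζ < 1) (hρ0 : 0 ≤ ρ) (hρ1 : ρ ≤ 1)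
    (hsat : ‖u - uub‖ ≤ ζ * ‖u - ud‖)
    (w : X) (hw : w ∈ Kd) (v : X) (hv : v ∈ Kub)
    (hvw : ‖uub - v‖ ≤ ρ * ‖uub - w‖) :
    ‖u - v‖ ≤ Real.sqrt (ζ ^ 2 + ρ ^ 2 * (1 - ζ ^ 2)) * ‖u - w‖ := by
  have pyth : ∀ z ∈ Kub, ‖u - z‖ ^ 2 = ‖u - uub‖ ^ 2 + ‖uub - z‖ ^ 2 := by
    intro z hz
    have h0 : ⟪u - uub, uub - z⟫ = 0 := horth _ (Submodule.sub_mem _ huub hz)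
    have : u - z = (u - uub) + (uub - z) := by abel
    rw [this, norm_add_sq_real, h0]
    ring
  have hpv := pyth v hv
  have hpw := pyth w (hsub hw)
  have hud_w : ‖u - uub‖ ≤ ζ * ‖u - w‖ :=
    hsat.trans (by nlinarith [hbest_d w hw, norm_nonneg (u - w), norm_nonneg (u - ud)])
  have huub2 : ‖u - uub‖ ^ 2 ≤ ζ ^ 2 * ‖u - w‖ ^ 2 := by
    nlinarith [norm_nonneg (u - uub), norm_nonneg (u - w)]
  have hv2 : ‖uub - v‖ ^ 2 ≤ ρ ^ 2 * ‖uub - w‖ ^ 2 := by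
    nlinarith [norm_nonneg (uub - v), norm_nonneg (uub - w)]
  have hζsq : ζ ^ 2 ≤ 1 := by nlinarith
  have hρsq : ρ ^ 2 ≤ 1 := by nlinarith
  have key : ‖u - v‖ ^ 2 ≤ (ζ ^ 2 + ρ ^ 2 * (1 - ζ ^ 2)) * ‖u - w‖ ^ 2 := by
    nlinarith [mul_le_mul_of_nonneg_left huub2 (sub_nonneg.mpr hρsq)]
  have h1 : ‖u - v‖ = Real.sqrt (‖u - v‖ ^ 2) := (Real.sqrt_sq (norm_nonneg _)).symm
  rw [h1]
  calc Real.sqrt (‖u - v‖ ^ 2) ≤ Real.sqrt ((ζ ^ 2 + ρ ^ 2 * (1 - ζ ^ 2)) * ‖u - w‖ ^ 2) :=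
        Real.sqrt_le_sqrt key
    _ = Real.sqrt (ζ ^ 2 + ρ ^ 2 * (1 - ζ ^ 2)) * ‖u - w‖ := by
        rw [Real.sqrt_mul (by nlinarith [sq_nonneg ρ]) , Real.sqrt_sq (norm_nonneg _)]
end

section
/- Let H be a real Hilbert space with energy inner product a(·,·) (bounded, symmetric, coercive) and associated norm ‖·‖_a. Let X^δ ⊆ X^{ubar} be finite-dimensional subspaces and let Θ = (θ_λ)_{λ∈J} be a finite family in X^{ubar} with X^δ + span Θ = X^{ubar}. Assume there exist 0 < m ≤ M such that for all z ∈ X^δ and all real coefficient vectors c: m²‖z + Σ_λ c_λ θ_λ‖_a² ≤ ‖z‖_a² + ‖c‖² ≤ M²‖z + Σ_λ c_λ θ_λ‖_a². Let u^{ubar} ∈ X^{ubar} solve a(u^{ubar}, v) = f(v) for all v ∈ X^{ubar}, let u^δ ∈ X^δ be its Galerkin approximation on X^δ, and let r = (f(θ_λ) − a(u^δ, θ_λ))_{λ∈J} be the residual vector. Then m‖r‖ ≤ ‖u^{ubar} − u^δ‖_a ≤ M‖r‖. -/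
open RealInnerProductSpace

/-- The energy space `E` carries the inner product `a(·,·)` with norm `‖·‖_a`. -/
theorem stmt_5 {E : Type*} [NormedAddCommGroup E] [InnerProductSpace ℝ E]
    (Xd Xub : Submodule ℝ E) (hsub : Xd ≤ Xub)
    [FiniteDimensional ℝ Xd] [FiniteDimensional ℝ Xub]
    {J : Type*} [Fintype J] (θ : J → E) (hθ : ∀ l, θ l ∈ Xub)
    (hspan : Xd ⊔ Submodule.span ℝ (Set.range θ) = Xub)
    (m M : ℝ) (hm : 0 < m) (hmM : m ≤ M)
    (hstab : ∀ z ∈ Xd, ∀ c : J → ℝ,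
      m ^ 2 * ‖z + ∑ l, c l • θ l‖ ^ 2 ≤ ‖z‖ ^ 2 + ∑ l, (c l) ^ 2 ∧
      ‖z‖ ^ 2 + ∑ l, (c l) ^ 2 ≤ M ^ 2 * ‖z + ∑ l, c l • θ l‖ ^ 2)
    (f : E →ₗ[ℝ] ℝ)
    (uub : E) (huub : uub ∈ Xub) (hGub : ∀ v ∈ Xub, ⟪uub, v⟫ = f v)
    (ud : E) (hud : ud ∈ Xd) (hGd : ∀ v ∈ Xd, ⟪ud, v⟫ = f v)
    (r : J → ℝ) (hr : ∀ l, r l = f (θ l) - ⟪ud, θ l⟫) :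
    m * Real.sqrt (∑ l, (r l) ^ 2) ≤ ‖uub - ud‖ ∧
      ‖uub - ud‖ ≤ M * Real.sqrt (∑ l, (r l) ^ 2) := by
  set e := uub - ud with he
  have hre : ∀ l, r l = ⟪e, θ l⟫ := by
    intro l
    rw [hr l, ← hGub (θ l) (hθ l), he, inner_sub_left]
  have hR2nn : (0:ℝ) ≤ ∑ l, (r l) ^ 2 := Finset.sum_nonneg fun l _ => sq_nonneg _
  set R := Real.sqrt (∑ l, (r l) ^ 2) with hRdef
  have hRnn : (0:ℝ) ≤ R := Real.sqrt_nonneg _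
  have hR2eq : ∑ l, (r l) ^ 2 = R ^ 2 := (Real.sq_sqrt hR2nn).symm
  have hMnn : (0:ℝ) ≤ M := le_trans hm.le hmM
  have hinner_sum : ∀ d : J → ℝ, ⟪e, ∑ l, d l • θ l⟫ = ∑ l, d l * r l := by
    intro d
    rw [inner_sum]
    refine Finset.sum_congr rfl fun l _ => ?_
    rw [real_inner_smul_right, hre l]
  by_cases h0 : e = 0
  · have hr0 : ∀ l, r l = 0 := fun l => by rw [hre l, h0, inner_zero_left]
    have hR0 : R = 0 := by simp [hRdef, hr0]
    simp [h0, hR0]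
  -- decompose e
  have heXub : e ∈ Xub := Submodule.sub_mem _ huub (hsub hud)
  rw [← hspan] at heXub
  obtain ⟨z, hz, y, hy, hzy⟩ := Submodule.mem_sup.mp heXub
  obtain ⟨c, hc⟩ := Submodule.mem_span_range_iff_exists_fun ℝ |>.mp hy
  have hedecomp : e = z + ∑ l, c l • θ l := by rw [hc, hzy]
  have henorm_pos : 0 < ‖e‖ := norm_pos_iff.mpr h0
  -- upper bound
  have horth : ⟪e, z⟫ = 0 := by
    rw [he, inner_sub_left, hGub z (hsub hz), hGd z hz, sub_self]
  have hC2 : ∑ l, (c l) ^ 2 ≤ M ^ 2 * ‖e‖ ^ 2 := by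
    have := (hstab z hz c).2
    rw [← hedecomp] at this
    nlinarith [sq_nonneg ‖z‖]
  have hCle : Real.sqrt (∑ l, (c l) ^ 2) ≤ M * ‖e‖ := by
    rw [show M ^ 2 * ‖e‖ ^ 2 = (M * ‖e‖) ^ 2 by ring] at hC2
    calc Real.sqrt (∑ l, (c l) ^ 2) ≤ Real.sqrt ((M * ‖e‖) ^ 2) :=
          Real.sqrt_le_sqrt hC2
      _ = M * ‖e‖ := Real.sqrt_sq (by positivity)
  have hkey : ‖e‖ ^ 2 = ∑ l, c l * r l := by
    have : ⟪e, e⟫ = ⟪e, z⟫ + ⟪e, ∑ l, c l • θ l⟫ := by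
      nth_rewrite 2 [hedecomp]
      rw [inner_add_right]
    rw [← real_inner_self_eq_norm_sq, this, horth, zero_add, hinner_sum]
  have hCS : ∑ l, c l * r l ≤ Real.sqrt (∑ l, (c l) ^ 2) * R :=
    Real.sum_mul_le_sqrt_mul_sqrt _ _ _
  have hupper : ‖e‖ ≤ M * R := by
    have h1 : ‖e‖ ^ 2 ≤ M * ‖e‖ * R := by
      rw [hkey]
      calc ∑ l, c l * r l ≤ Real.sqrt (∑ l, (c l) ^ 2) * R := hCS
        _ ≤ M * ‖e‖ * R := by
            exact mul_le_mul_of_nonneg_right hCle hRnn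
    nlinarith
  -- lower bound
  have hlower : m * R ≤ ‖e‖ := by
    have hvinner : ⟪e, ∑ l, r l • θ l⟫ = R ^ 2 := by
      rw [hinner_sum, ← hR2eq]
      exact Finset.sum_congr rfl fun l _ => (sq (r l)).symm
    have hv2 : m ^ 2 * ‖∑ l, r l • θ l‖ ^ 2 ≤ R ^ 2 := by
      have := (hstab 0 (Submodule.zero_mem _) r).1
      simpa [hR2eq] using this
    have hvle : m * ‖∑ l, r l • θ l‖ ≤ R := by
      have h := Real.sqrt_le_sqrt hv2
      rwa [show m ^ 2 * ‖∑ l, r l • θ l‖ ^ 2 = (m * ‖∑ l, r l • θ l‖) ^ 2 by ring,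
        Real.sqrt_sq (by positivity), Real.sqrt_sq hRnn] at h
    have hcs2 : R ^ 2 ≤ ‖e‖ * ‖∑ l, r l • θ l‖ := by
      rw [← hvinner]; exact real_inner_le_norm _ _
    rcases eq_or_lt_of_le hRnn with hR0 | hRpos
    · rw [← hR0, mul_zero]; exact norm_nonneg _
    · have : m * R * R ≤ ‖e‖ * R := by
        calc m * R * R = m * R ^ 2 := by ring
          _ ≤ m * (‖e‖ * ‖∑ l, r l • θ l‖) :=
              mul_le_mul_of_nonneg_left hcs2 hm.le
          _ = ‖e‖ * (m * ‖∑ l, r l • θ l‖) := by ring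
          _ ≤ ‖e‖ * R := mul_le_mul_of_nonneg_left hvle (norm_nonneg _)
      exact le_of_mul_le_mul_right this hRpos
  exact ⟨hlower, hupper⟩
end

section
/- In the setting of the stable collection Θ and Galerkin solutions u^{ubar} ∈ X^{ubar}, u^δ ∈ X^δ with residual vector r = (f(θ_λ) − a(u^δ, θ_λ))_{λ∈J}: if J' ⊆ J satisfies ‖r|_{J'}‖ ≥ ϑ‖r‖ for some ϑ ∈ (0,1], and X^{δ̃} is a subspace with X^δ + span{θ_λ : λ ∈ J'} ⊆ X^{δ̃} ⊆ X^{ubar}, then the Galerkin solution u^{δ̃} on X^{δ̃} satisfies ‖u^{ubar} − u^{δ̃}‖_a ≤ sqrt(1 − (m/M · ϑ)²) · ‖u^{ubar} − u^δ‖_a. -/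
open RealInnerProductSpace

lemma stmt_6_aux (m R' B nv : ℝ) (hm : 0 < m) (hR'nn : 0 ≤ R') (hBnn : 0 ≤ B)
    (hnv : 0 ≤ nv) (h1 : m * nv ≤ R') (h2 : R' ^ 2 ≤ B * nv) : m * R' ≤ B := by
  rcases eq_or_lt_of_le hR'nn with h0 | h0
  · rw [← h0]; simpa using hBnn
  · nlinarith [mul_le_mul_of_nonneg_left h2 hm.le, mul_le_mul_of_nonneg_left h1 hBnn]

set_option maxHeartbeats 1000000 in
theorem stmt_6 {E : Type*} [NormedAddCommGroup E] [InnerProductSpace ℝ E]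
    (Xd Xdt Xub : Submodule ℝ E) (hsub : Xd ≤ Xub) [FiniteDimensional ℝ Xub]
    {J : Type*} [Fintype J] (θ : J → E) (hθ : ∀ l, θ l ∈ Xub)
    (hspan : Xd ⊔ Submodule.span ℝ (Set.range θ) = Xub)
    (m M : ℝ) (hm : 0 < m) (hmM : m ≤ M)
    (hstab : ∀ z ∈ Xd, ∀ c : J → ℝ,
      m ^ 2 * ‖z + ∑ l, c l • θ l‖ ^ 2 ≤ ‖z‖ ^ 2 + ∑ l, (c l) ^ 2 ∧
      ‖z‖ ^ 2 + ∑ l, (c l) ^ 2 ≤ M ^ 2 * ‖z + ∑ l, c l • θ l‖ ^ 2)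
    (f : E →ₗ[ℝ] ℝ)
    (uub : E) (huub : uub ∈ Xub) (hGub : ∀ v ∈ Xub, ⟪uub, v⟫ = f v)
    (ud : E) (hud : ud ∈ Xd) (hGd : ∀ v ∈ Xd, ⟪ud, v⟫ = f v)
    (r : J → ℝ) (hr : ∀ l, r l = f (θ l) - ⟪ud, θ l⟫)
    (ϑ : ℝ) (hϑ0 : 0 < ϑ) (hϑ1 : ϑ ≤ 1)
    (J' : Finset J)
    (hmark : ϑ * Real.sqrt (∑ l, (r l) ^ 2) ≤ Real.sqrt (∑ l ∈ J', (r l) ^ 2))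
    (hXdt_low : Xd ≤ Xdt) (hXdt_up : Xdt ≤ Xub) (hθJ' : ∀ l ∈ J', θ l ∈ Xdt)
    (udt : E) (hudt : udt ∈ Xdt) (hGdt : ∀ v ∈ Xdt, ⟪udt, v⟫ = f v) :
    ‖uub - udt‖ ≤ Real.sqrt (1 - (m / M * ϑ) ^ 2) * ‖uub - ud‖ := by
  classical
  have hM : 0 < M := lt_of_lt_of_le hm hmM
  have hresid : ∀ l, ⟪uub - ud, θ l⟫ = r l := by
    intro l; rw [inner_sub_left, hGub _ (hθ l), hr]
  have hresid2 : ∀ l ∈ J', ⟪udt - ud, θ l⟫ = r l := by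
    intro l hl; rw [inner_sub_left, hGdt _ (hθJ' l hl), hr]
  set A := ‖uub - ud‖ with hA
  set B := ‖udt - ud‖ with hB
  set C := ‖uub - udt‖ with hC
  have hAnn : 0 ≤ A := norm_nonneg _
  have hBnn : 0 ≤ B := norm_nonneg _
  have hCnn : 0 ≤ C := norm_nonneg _
  set R := Real.sqrt (∑ l, (r l) ^ 2) with hR
  set R' := Real.sqrt (∑ l ∈ J', (r l) ^ 2) with hR'
  have hRnn : 0 ≤ R := Real.sqrt_nonneg _
  have hR'nn : 0 ≤ R' := Real.sqrt_nonneg _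
  have hRsq : R ^ 2 = ∑ l, (r l) ^ 2 :=
    Real.sq_sqrt (Finset.sum_nonneg fun _ _ => sq_nonneg _)
  have hR'sq : R' ^ 2 = ∑ l ∈ J', (r l) ^ 2 :=
    Real.sq_sqrt (Finset.sum_nonneg fun _ _ => sq_nonneg _)
  -- Pythagoras
  have hpyth : A ^ 2 = C ^ 2 + B ^ 2 := by
    have horth : ⟪uub - udt, udt - ud⟫ = 0 := by
      have hmem : udt - ud ∈ Xdt := Submodule.sub_mem Xdt hudt (hXdt_low hud)
      rw [inner_sub_left, hGub _ (hXdt_up hmem), hGdt _ hmem, sub_self]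
    have hsplit : uub - ud = (uub - udt) + (udt - ud) := by abel
    rw [hA, hsplit, @norm_add_sq_real, horth]
    ring
  -- Upper bound A ≤ M * R
  have hA_le : A ≤ M * R := by
    obtain ⟨z, hz, y, hy, hzy⟩ := Submodule.mem_sup.mp
      (hspan ▸ Submodule.sub_mem Xub huub (hsub hud))
    obtain ⟨c, hc⟩ := (Submodule.mem_span_range_iff_exists_fun ℝ).mp hy
    have hrep : uub - ud = z + ∑ l, c l • θ l := by rw [hc, hzy]
    have h1 : A ^ 2 = ∑ l, c l * r l := by
      rw [hA, ← real_inner_self_eq_norm_sq]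
      nth_rewrite 2 [hrep]
      rw [inner_add_right, inner_sum]
      have hz0 : ⟪uub - ud, z⟫ = 0 := by
        rw [inner_sub_left, hGub _ (hsub hz), hGd _ hz, sub_self]
      rw [hz0, zero_add]
      congr 1; ext l
      rw [real_inner_smul_right, hresid]
    have hcs : (∑ l, c l * r l) ^ 2 ≤ (∑ l, (c l) ^ 2) * ∑ l, (r l) ^ 2 :=
      Finset.sum_mul_sq_le_sq_mul_sq _ _ _
    have hcb : ∑ l, (c l) ^ 2 ≤ M ^ 2 * A ^ 2 := by
      have := (hstab z hz c).2
      rw [← hrep] at this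
      nlinarith [sq_nonneg ‖z‖]
    rw [← hRsq] at hcs
    have h4 : A ^ 2 * A ^ 2 ≤ (M * R) ^ 2 * A ^ 2 := by nlinarith
    have h5 : A ^ 2 ≤ (M * R) ^ 2 := by
      rcases eq_or_lt_of_le hAnn with h0 | h0
      · rw [← h0]; simpa using sq_nonneg (M * R)
      · have := mul_le_mul_of_nonneg_right h4 (le_of_lt (inv_pos.mpr (pow_pos h0 2)))
        calc A ^ 2 = A ^ 2 * A ^ 2 * (A ^ 2)⁻¹ := by field_simp
          _ ≤ (M * R) ^ 2 * A ^ 2 * (A ^ 2)⁻¹ := by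
              apply mul_le_mul_of_nonneg_right h4; positivity
          _ = (M * R) ^ 2 := by field_simp
    calc A = Real.sqrt (A ^ 2) := (Real.sqrt_sq hAnn).symm
      _ ≤ Real.sqrt ((M * R) ^ 2) := Real.sqrt_le_sqrt h5
      _ = M * R := Real.sqrt_sq (by positivity)
  -- Lower bound m * R' ≤ B
  have hB_ge : m * R' ≤ B := by
    set c' : J → ℝ := fun l => if l ∈ J' then r l else 0 with hc'
    have hcsum : ∑ l, (c' l) ^ 2 = ∑ l ∈ J', (r l) ^ 2 := by
      have hpt : ∀ l, (c' l) ^ 2 = if l ∈ J' then (r l) ^ 2 else 0 := by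
        intro l; simp [hc', apply_ite (fun x : ℝ => x ^ 2)]
      rw [Finset.sum_congr rfl fun l _ => hpt l, Finset.sum_ite_mem, Finset.univ_inter]
    set v : E := ∑ l, c' l • θ l with hv
    have hvJ' : v = ∑ l ∈ J', r l • θ l := by
      have hpt : ∀ l, c' l • θ l = if l ∈ J' then r l • θ l else 0 := by
        intro l; simp [hc', ite_smul]
      rw [hv, Finset.sum_congr rfl fun l _ => hpt l, Finset.sum_ite_mem, Finset.univ_inter]
    have hvbd : m ^ 2 * ‖v‖ ^ 2 ≤ R' ^ 2 := by
      have := (hstab 0 (Submodule.zero_mem Xd) c').1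
      rw [norm_zero, zero_add] at this
      rw [hR'sq, ← hcsum]
      simpa using this
    have hinner : ⟪udt - ud, v⟫ = R' ^ 2 := by
      rw [hvJ', inner_sum, hR'sq]
      refine Finset.sum_congr rfl fun l hl => ?_
      rw [real_inner_smul_right, hresid2 l hl]; ring
    have hle : R' ^ 2 ≤ B * ‖v‖ := by
      rw [← hinner]; exact real_inner_le_norm _ _
    have hvnn : 0 ≤ ‖v‖ := norm_nonneg _
    have hmv : m * ‖v‖ ≤ R' := by
      calc m * ‖v‖ = Real.sqrt ((m * ‖v‖) ^ 2) := (Real.sqrt_sq (by positivity)).symm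
        _ ≤ Real.sqrt (R' ^ 2) := Real.sqrt_le_sqrt (by nlinarith)
        _ = R' := Real.sqrt_sq hR'nn
    exact stmt_6_aux m R' B ‖v‖ hm hR'nn hBnn hvnn hmv hle
  -- combine
  have hk1 : m / M * ϑ ≤ 1 := by
    have : m / M ≤ 1 := (div_le_one hM).mpr hmM
    nlinarith
  have hknn : 0 ≤ m / M * ϑ := by positivity
  have hBA : m / M * ϑ * A ≤ B := by
    calc m / M * ϑ * A ≤ m / M * ϑ * (M * R) := by
          apply mul_le_mul_of_nonneg_left hA_le hknn
      _ = m * (ϑ * R) := by field_simp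
      _ ≤ m * R' := by
          apply mul_le_mul_of_nonneg_left hmark (le_of_lt hm)
      _ ≤ B := hB_ge
  have hC2 : C ^ 2 ≤ (1 - (m / M * ϑ) ^ 2) * A ^ 2 := by
    nlinarith [mul_le_mul hBA hBA (by positivity) hBnn]
  calc C = Real.sqrt (C ^ 2) := (Real.sqrt_sq hCnn).symm
    _ ≤ Real.sqrt ((1 - (m / M * ϑ) ^ 2) * A ^ 2) := Real.sqrt_le_sqrt hC2
    _ = Real.sqrt (1 - (m / M * ϑ) ^ 2) * A := by
        rw [Real.sqrt_mul (by nlinarith) , Real.sqrt_sq hAnn]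
end

section
/- Let X be a real Hilbert space, u ∈ X, X^δ ⊆ X^{ubar} closed subspaces with best approximations u_δ, u_{ubar} of u and saturation ‖u − u_{ubar}‖ ≤ ζ‖u − u_δ‖, ζ < 1. Let u* ∈ X^{ubar} and u*_δ ∈ X^δ (approximate Galerkin solutions) satisfy ‖u − u*‖ ≤ κ‖u − u_{ubar}‖ and the assumption that u*_δ ∈ X^δ. Then: (a) ‖u_{ubar} − u*_δ‖ ≤ ‖u − u*_δ‖ ≤ (1 − ζ²)^{−1/2}‖u_{ubar} − u*_δ‖; (b) | ‖u_{ubar} − u*_δ‖ − ‖u* − u*_δ‖ | ≤ ζ·sqrt(κ² − 1)·‖u − u*_δ‖. -/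
open RealInnerProductSpace

theorem stmt_9 {X : Type*} [NormedAddCommGroup X] [InnerProductSpace ℝ X] [CompleteSpace X]
    (Kd Kub : Submodule ℝ X) (hclosed_d : IsClosed (Kd : Set X))
    (hclosed_ub : IsClosed (Kub : Set X)) (hsub : Kd ≤ Kub)
    (u uub : X) (huub : uub ∈ Kub)
    (horth : ∀ w ∈ Kub, ⟪u - uub, w⟫ = 0)
    (ζ : ℝ) (hζ0 : 0 ≤ ζ) (hζ1 : ζ < 1)
    (hsat : ∀ w ∈ Kd, ‖u - uub‖ ≤ ζ * ‖u - w‖)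
    (κ : ℝ) (hκ : 1 ≤ κ)
    (ustar : X) (hustar : ustar ∈ Kub) (hκbound : ‖u - ustar‖ ≤ κ * ‖u - uub‖)
    (ustard : X) (hustard : ustard ∈ Kd) :
    (‖uub - ustard‖ ≤ ‖u - ustard‖ ∧
      ‖u - ustard‖ ≤ (1 - ζ ^ 2) ^ (-(1 : ℝ) / 2) * ‖uub - ustard‖) ∧
    |‖uub - ustard‖ - ‖ustar - ustard‖| ≤ ζ * Real.sqrt (κ ^ 2 - 1) * ‖u - ustard‖ := by
  have pyth1 : ‖u - ustard‖ ^ 2 = ‖u - uub‖ ^ 2 + ‖uub - ustard‖ ^ 2 := by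
    have h := horth (uub - ustard) (Kub.sub_mem huub (hsub hustard))
    have he : u - ustard = (u - uub) + (uub - ustard) := by abel
    rw [he, norm_add_sq_real, h]; ring
  have pyth2 : ‖u - ustar‖ ^ 2 = ‖u - uub‖ ^ 2 + ‖uub - ustar‖ ^ 2 := by
    have h := horth (uub - ustar) (Kub.sub_mem huub hustar)
    have he : u - ustar = (u - uub) + (uub - ustar) := by abel
    rw [he, norm_add_sq_real, h]; ring
  have hc : (0:ℝ) < 1 - ζ ^ 2 := by nlinarith
  have h1 := hsat ustard hustard
  have a1 : ‖uub - ustard‖ ≤ ‖u - ustard‖ := by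
    nlinarith [norm_nonneg (u - ustard), norm_nonneg (uub - ustard), norm_nonneg (u - uub),
      sq_nonneg (‖u - ustard‖ - ‖uub - ustard‖)]
  have key : Real.sqrt (1 - ζ ^ 2) * ‖u - ustard‖ ≤ ‖uub - ustard‖ := by
    have hsq : (Real.sqrt (1 - ζ ^ 2) * ‖u - ustard‖) ^ 2 ≤ ‖uub - ustard‖ ^ 2 := by
      rw [mul_pow, Real.sq_sqrt hc.le]
      nlinarith [norm_nonneg (u - ustard), norm_nonneg (u - uub)]
    have := Real.sqrt_le_sqrt hsq
    rwa [Real.sqrt_sq (by positivity), Real.sqrt_sq (norm_nonneg _)] at this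
  have hs : (0:ℝ) < Real.sqrt (1 - ζ ^ 2) := Real.sqrt_pos.mpr hc
  have a2 : ‖u - ustard‖ ≤ (1 - ζ ^ 2) ^ (-(1:ℝ) / 2) * ‖uub - ustard‖ := by
    have hr : (1 - ζ ^ 2) ^ (-(1:ℝ) / 2) = (Real.sqrt (1 - ζ ^ 2))⁻¹ := by
      rw [Real.sqrt_eq_rpow, ← Real.rpow_neg hc.le]
      norm_num
    rw [hr]
    have : ‖u - ustard‖ = (Real.sqrt (1 - ζ ^ 2))⁻¹ * (Real.sqrt (1 - ζ ^ 2) * ‖u - ustard‖) := by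
      field_simp
    rw [this]
    exact mul_le_mul_of_nonneg_left key (by positivity)
  refine ⟨⟨a1, a2⟩, ?_⟩
  have tri : |‖uub - ustard‖ - ‖ustar - ustard‖| ≤ ‖uub - ustar‖ := by
    have := abs_norm_sub_norm_le (uub - ustard) (ustar - ustard)
    have he : (uub - ustard) - (ustar - ustard) = uub - ustar := by abel
    rwa [he] at this
  have hκ2 : (0:ℝ) ≤ κ ^ 2 - 1 := by nlinarith
  have b1 : ‖uub - ustar‖ ≤ Real.sqrt (κ ^ 2 - 1) * ‖u - uub‖ := by
    have hsq : ‖uub - ustar‖ ^ 2 ≤ (Real.sqrt (κ ^ 2 - 1) * ‖u - uub‖) ^ 2 := by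
      rw [mul_pow, Real.sq_sqrt hκ2]
      nlinarith [norm_nonneg (u - ustar), norm_nonneg (u - uub)]
    have := Real.sqrt_le_sqrt hsq
    rwa [Real.sqrt_sq (norm_nonneg _), Real.sqrt_sq (by positivity)] at this
  calc |‖uub - ustard‖ - ‖ustar - ustard‖| ≤ ‖uub - ustar‖ := tri
    _ ≤ Real.sqrt (κ ^ 2 - 1) * ‖u - uub‖ := b1
    _ ≤ Real.sqrt (κ ^ 2 - 1) * (ζ * ‖u - ustard‖) :=
        mul_le_mul_of_nonneg_left h1 (Real.sqrt_nonneg _)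
    _ = ζ * Real.sqrt (κ ^ 2 - 1) * ‖u - ustard‖ := by ring
end

section
/- Let X be a real Hilbert space, X^δ ⊆ X^{ubar} ⊆ X closed subspaces, u ∈ X with best approximation u_{ubar} onto X^{ubar}, saturation ‖u − u_{ubar}‖ ≤ ζ‖u − v‖ for all v ∈ X^δ, ζ < 1. Let s be a positive semidefinite symmetric bilinear form on X with seminorm |·|ₛ satisfying (γ/√κ)‖x‖ ≤ |x|ₛ ≤ √κ‖x‖ for x ∈ X^{ubar} and |x|ₛ ≤ √κ‖x‖ for all x ∈ X, where κ ≥ 1 ≥ γ > 0. Let u** ∈ X^{ubar} satisfy s(u − u**, X^{ubar}) = 0 and ‖u − u**‖ ≤ (κ/γ)‖u − u_{ubar}‖. If ζκ < γ, then for every v ∈ X^δ: ((γ − ζκ)/√κ)·‖u − v‖ ≤ |u − v|ₛ ≤ sqrt(κ(ζ² + (1 + ζκ/γ)²))·‖u − v‖. -/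
open RealInnerProductSpace

set_option maxHeartbeats 1000000 in
theorem stmt_11 {X : Type*} [NormedAddCommGroup X] [InnerProductSpace ℝ X] [CompleteSpace X]
    (Kd Kub : Submodule ℝ X) (hclosed_d : IsClosed (Kd : Set X))
    (hclosed_ub : IsClosed (Kub : Set X)) (hsub : Kd ≤ Kub)
    (u uub : X) (huub : uub ∈ Kub)
    (horth : ∀ w ∈ Kub, ⟪u - uub, w⟫ = 0)
    (ζ : ℝ) (hζ0 : 0 ≤ ζ) (hζ1 : ζ < 1)
    (hsat : ∀ v ∈ Kd, ‖u - uub‖ ≤ ζ * ‖u - v‖)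
    (s : X →ₗ[ℝ] X →ₗ[ℝ] ℝ)
    (hsymm : ∀ x y, s x y = s y x) (hpos : ∀ x, 0 ≤ s x x)
    (κ γ : ℝ) (hκ : 1 ≤ κ) (hγ0 : 0 < γ) (hγ1 : γ ≤ 1)
    (hlow : ∀ x ∈ Kub, (γ / Real.sqrt κ) * ‖x‖ ≤ Real.sqrt (s x x))
    (hup : ∀ x : X, Real.sqrt (s x x) ≤ Real.sqrt κ * ‖x‖)
    (ustst : X) (hustst : ustst ∈ Kub)
    (hsorth : ∀ w ∈ Kub, s (u - ustst) w = 0)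
    (hquasi : ‖u - ustst‖ ≤ (κ / γ) * ‖u - uub‖)
    (hζκγ : ζ * κ < γ) :
    ∀ v ∈ Kd,
      ((γ - ζ * κ) / Real.sqrt κ) * ‖u - v‖ ≤ Real.sqrt (s (u - v) (u - v)) ∧
      Real.sqrt (s (u - v) (u - v)) ≤
        Real.sqrt (κ * (ζ ^ 2 + (1 + ζ * κ / γ) ^ 2)) * ‖u - v‖ := by
  intro v hv
  have hvub : v ∈ Kub := hsub hv
  set a := ‖u - v‖ with ha
  have ha0 : 0 ≤ a := norm_nonneg _
  have hκ0 : (0:ℝ) < κ := by linarith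
  have hsκ : 0 < Real.sqrt κ := Real.sqrt_pos.mpr hκ0
  have hsκ2 : Real.sqrt κ ^ 2 = κ := Real.sq_sqrt hκ0.le
  have h1 : ustst - v ∈ Kub := Kub.sub_mem hustst hvub
  have h2 : ustst - uub ∈ Kub := Kub.sub_mem hustst huub
  have expand : ∀ x y : X, s (x + y) (x + y) = s x x + 2 * s x y + s y y := by
    intro x y
    simp only [map_add, LinearMap.add_apply]
    rw [hsymm y x]; ring
  have hTv : s (u - v) (u - v)
      = s (u - ustst) (u - ustst) + s (ustst - v) (ustst - v) := by
    have h : u - v = (u - ustst) + (ustst - v) := by abel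
    rw [h, expand, hsorth _ h1]; ring
  have hTub : s (u - uub) (u - uub)
      = s (u - ustst) (u - ustst) + s (ustst - uub) (ustst - uub) := by
    have h : u - uub = (u - ustst) + (ustst - uub) := by abel
    rw [h, expand, hsorth _ h2]; ring
  have hupsq : ∀ x : X, s x x ≤ κ * ‖x‖ ^ 2 := by
    intro x
    have h := hup x
    have h1' := Real.sq_sqrt (hpos x)
    nlinarith [Real.sqrt_nonneg (s x x), Real.sqrt_nonneg κ, norm_nonneg x,
      mul_self_le_mul_self (Real.sqrt_nonneg (s x x)) h]
  have hlowsq : ∀ x ∈ Kub, γ ^ 2 / κ * ‖x‖ ^ 2 ≤ s x x := by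
    intro x hx
    have h := hlow x hx
    have h1' := Real.sq_sqrt (hpos x)
    have h0 : 0 ≤ (γ / Real.sqrt κ) * ‖x‖ := by positivity
    have := mul_self_le_mul_self h0 h
    have hdiv : (γ / Real.sqrt κ) ^ 2 = γ ^ 2 / κ := by
      rw [div_pow, hsκ2]
    nlinarith
  -- norm bounds
  have hnub : ‖u - uub‖ ≤ ζ * a := hsat v hv
  have hnst : ‖u - ustst‖ ≤ ζ * κ / γ * a := by
    calc ‖u - ustst‖ ≤ (κ / γ) * ‖u - uub‖ := hquasi
      _ ≤ (κ / γ) * (ζ * a) := by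
          apply mul_le_mul_of_nonneg_left hnub; positivity
      _ = ζ * κ / γ * a := by ring
  have hA : s (u - ustst) (u - ustst) ≤ κ * (ζ * a) ^ 2 := by
    have h1' : s (u - ustst) (u - ustst) ≤ s (u - uub) (u - uub) := by
      have := hpos (ustst - uub); linarith [hTub]
    have h2' : s (u - uub) (u - uub) ≤ κ * ‖u - uub‖ ^ 2 := hupsq _
    have h3' : ‖u - uub‖ ^ 2 ≤ (ζ * a) ^ 2 := by
      nlinarith [norm_nonneg (u - uub)]
    nlinarith
  have hBn : ‖ustst - v‖ ≤ (1 + ζ * κ / γ) * a := by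
    have h : ‖ustst - v‖ ≤ ‖ustst - u‖ + ‖u - v‖ :=
      norm_sub_le_norm_sub_add_norm_sub ustst u v
    rw [norm_sub_rev ustst u] at h
    linarith
  have hB : s (ustst - v) (ustst - v) ≤ κ * ((1 + ζ * κ / γ) * a) ^ 2 := by
    have h2' : s (ustst - v) (ustst - v) ≤ κ * ‖ustst - v‖ ^ 2 := hupsq _
    have h3' : ‖ustst - v‖ ^ 2 ≤ ((1 + ζ * κ / γ) * a) ^ 2 :=
      pow_le_pow_left₀ (norm_nonneg _) hBn 2
    nlinarith
  constructor
  · -- lower bound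
    have hc0 : 0 ≤ (γ - ζ * κ) / Real.sqrt κ * a := by
      apply mul_nonneg _ ha0
      apply div_nonneg (by linarith) hsκ.le
    refine (Real.le_sqrt hc0 (hpos _)).mpr ?_
    have hwn : (1 - ζ * κ / γ) * a ≤ ‖ustst - v‖ := by
      have h : a ≤ ‖u - ustst‖ + ‖ustst - v‖ :=
        norm_sub_le_norm_sub_add_norm_sub u ustst v
      nlinarith
    have hw0 : 0 ≤ (1 - ζ * κ / γ) * a := by
      have : ζ * κ / γ < 1 := by rw [div_lt_one hγ0]; linarith
      nlinarith
    have hBl : γ ^ 2 / κ * ‖ustst - v‖ ^ 2 ≤ s (ustst - v) (ustst - v) := hlowsq _ h1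
    have hsq : ((1 - ζ * κ / γ) * a) ^ 2 ≤ ‖ustst - v‖ ^ 2 := by
      nlinarith [norm_nonneg (ustst - v)]
    have hkey : (γ - ζ * κ) ^ 2 / κ * a ^ 2 ≤ s (ustst - v) (ustst - v) := by
      have hid1 : (γ - ζ * κ) ^ 2 / κ * a ^ 2 = γ ^ 2 / κ * (((1 - ζ * κ / γ) * a) ^ 2) := by
        field_simp
      rw [hid1]
      calc γ ^ 2 / κ * ((1 - ζ * κ / γ) * a) ^ 2
          ≤ γ ^ 2 / κ * ‖ustst - v‖ ^ 2 := by
            apply mul_le_mul_of_nonneg_left hsq; positivity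
        _ ≤ s (ustst - v) (ustst - v) := hBl
    have hid2 : ((γ - ζ * κ) / Real.sqrt κ * a) ^ 2 = (γ - ζ * κ) ^ 2 / κ * a ^ 2 := by
      rw [mul_pow, div_pow, hsκ2]
    rw [hid2, hTv]
    have := hpos (u - ustst)
    linarith
  · -- upper bound
    have hT : s (u - v) (u - v) ≤ κ * (ζ ^ 2 + (1 + ζ * κ / γ) ^ 2) * a ^ 2 := by
      rw [hTv]; nlinarith
    have hstep := Real.sqrt_le_sqrt hT
    rwa [Real.sqrt_mul (by positivity : (0:ℝ) ≤ κ * (ζ ^ 2 + (1 + ζ * κ / γ) ^ 2)) (a ^ 2),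
      Real.sqrt_sq ha0] at hstep
end

section
/- Let V be a finite-dimensional real inner product space with two bases related by a block-triangular change of basis: V = V₁ ⊕ V₂ (algebraic direct sum), with bases Φ₁ ∪ Φ₂ and Φ₁ ∪ Φ̂₂ where each φ̂ ∈ Φ̂₂ equals the corresponding φ ∈ Φ₂ plus a linear combination of elements of Φ₁ with coefficients bounded in absolute value by C, each φ̂ involving at most k elements of Φ₁, and each element of Φ₁ appearing in at most k of the φ̂'s. If Φ₁ ∪ Φ₂ is a Riesz system with constants A ≤ B (i.e. A‖c‖² ≤ ‖Σ c_i ψ_i‖² ≤ B‖c‖² for the normalized basis), then Φ₁ ∪ Φ̂₂ is also a Riesz system with constants depending only on A, B, C, k. -/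
set_option maxHeartbeats 4000000 in
theorem stmt_16 (A B C : ℝ) (k : ℕ) (hA : 0 < A) (hAB : A ≤ B) (hC : 0 ≤ C) :
    ∃ A' B' : ℝ, 0 < A' ∧ A' ≤ B' ∧
      ∀ (V : Type) (_ : NormedAddCommGroup V), ∀ (_ : InnerProductSpace ℝ V),
        FiniteDimensional ℝ V →
      ∀ (ι₁ ι₂ : Type) (_ : Fintype ι₁) (_ : Fintype ι₂),
      ∀ (Φ₁ : ι₁ → V) (Φ₂ : ι₂ → V),
        (∀ i, Φ₁ i ≠ 0) → (∀ j, Φ₂ j ≠ 0) →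
        -- Φ₁ ∪ Φ₂ is a normalized Riesz system with constants A ≤ B
        (∀ (c₁ : ι₁ → ℝ) (c₂ : ι₂ → ℝ),
          A * (∑ i, (c₁ i) ^ 2 + ∑ j, (c₂ j) ^ 2) ≤
            ‖(∑ i, c₁ i • (‖Φ₁ i‖⁻¹ • Φ₁ i)) + ∑ j, c₂ j • (‖Φ₂ j‖⁻¹ • Φ₂ j)‖ ^ 2 ∧
          ‖(∑ i, c₁ i • (‖Φ₁ i‖⁻¹ • Φ₁ i)) + ∑ j, c₂ j • (‖Φ₂ j‖⁻¹ • Φ₂ j)‖ ^ 2 ≤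
            B * (∑ i, (c₁ i) ^ 2 + ∑ j, (c₂ j) ^ 2)) →
      ∀ (S : ι₂ → Finset ι₁) (t : ι₂ → ι₁ → ℝ),
        -- coefficient bound, sparsity of the triangular change of basis
        (∀ j, ∀ i ∈ S j, |t j i| * ‖Φ₁ i‖ ≤ C * ‖Φ₂ j‖) →
        (∀ j, (S j).card ≤ k) →
        (∀ i : ι₁, {j : ι₂ | i ∈ S j}.ncard ≤ k) →
      ∀ (Φ₂hat : ι₂ → V),
        (∀ j, Φ₂hat j = Φ₂ j + ∑ i ∈ S j, t j i • Φ₁ i) →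
        (∀ j, Φ₂hat j ≠ 0) →
        -- then Φ₁ ∪ Φ̂₂ is a normalized Riesz system with constants A' ≤ B'
        ∀ (c₁ : ι₁ → ℝ) (c₂ : ι₂ → ℝ),
          A' * (∑ i, (c₁ i) ^ 2 + ∑ j, (c₂ j) ^ 2) ≤
            ‖(∑ i, c₁ i • (‖Φ₁ i‖⁻¹ • Φ₁ i)) + ∑ j, c₂ j • (‖Φ₂hat j‖⁻¹ • Φ₂hat j)‖ ^ 2 ∧
          ‖(∑ i, c₁ i • (‖Φ₁ i‖⁻¹ • Φ₁ i)) + ∑ j, c₂ j • (‖Φ₂hat j‖⁻¹ • Φ₂hat j)‖ ^ 2 ≤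
            B' * (∑ i, (c₁ i) ^ 2 + ∑ j, (c₂ j) ^ 2) := by
  classical
  set K : ℝ := (k : ℝ) ^ 2 * C ^ 2 / A with hKdef
  set Q : ℝ := B * (1 + (k : ℝ) * C ^ 2) with hQdef
  set M : ℝ := 2 + (2 * K + 1) * Q with hMdef
  have hB : (0:ℝ) < B := lt_of_lt_of_le hA hAB
  have hK : 0 ≤ K := div_nonneg (by positivity) hA.le
  have hQ : 0 ≤ Q := mul_nonneg hB.le (by positivity)
  have hM : (2:ℝ) ≤ M := by nlinarith [mul_nonneg (by linarith : (0:ℝ) ≤ 2*K+1) hQ]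
  have hMpos : (0:ℝ) < M := by linarith
  refine ⟨A / M, B * (2 + 2 * K + 1 / A), div_pos hA hMpos, ?_, ?_⟩
  · have h1 : A / M ≤ A := by
      rw [div_le_iff₀ hMpos]; nlinarith
    have h2 : B ≤ B * (2 + 2 * K + 1 / A) := by
      nlinarith [mul_nonneg hB.le hK, mul_pos hB (by positivity : (0:ℝ) < 1/A)]
    linarith
  intro V iV1 iV2 _hfd ι₁ ι₂ iF1 iF2 Φ₁ Φ₂ hΦ₁ hΦ₂ hR S t ht hScard hT Φh hhat hΦh c₁ c₂
  have hn₁ : ∀ i, (0:ℝ) < ‖Φ₁ i‖ := fun i => norm_pos_iff.mpr (hΦ₁ i)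
  have hn₂ : ∀ j, (0:ℝ) < ‖Φ₂ j‖ := fun j => norm_pos_iff.mpr (hΦ₂ j)
  have hnh : ∀ j, (0:ℝ) < ‖Φh j‖ := fun j => norm_pos_iff.mpr (hΦh j)
  -- Step 1: per-j comparison of ‖Φh j‖ with ‖Φ₂ j‖
  have key : ∀ j, A * ‖Φ₂ j‖ ^ 2 ≤ ‖Φh j‖ ^ 2 ∧ ‖Φh j‖ ^ 2 ≤ Q * ‖Φ₂ j‖ ^ 2 := by
    intro j
    set e₁ : ι₁ → ℝ := fun i => if i ∈ S j then t j i * ‖Φ₁ i‖ else 0 with he₁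
    set e₂ : ι₂ → ℝ := Pi.single j ‖Φ₂ j‖ with he₂
    have hvec : (∑ i, e₁ i • (‖Φ₁ i‖⁻¹ • Φ₁ i)) + ∑ j', e₂ j' • (‖Φ₂ j'‖⁻¹ • Φ₂ j') = Φh j := by
      have h1 : ∑ i, e₁ i • (‖Φ₁ i‖⁻¹ • Φ₁ i) = ∑ i ∈ S j, t j i • Φ₁ i := by
        rw [show ∑ i, e₁ i • (‖Φ₁ i‖⁻¹ • Φ₁ i)
            = ∑ i, (if i ∈ S j then (t j i * ‖Φ₁ i‖) • (‖Φ₁ i‖⁻¹ • Φ₁ i) else 0) from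
          Finset.sum_congr rfl fun i _ => by by_cases h : i ∈ S j <;> simp [he₁, h]]
        rw [Finset.sum_ite_mem, Finset.univ_inter]
        refine Finset.sum_congr rfl fun i _ => ?_
        rw [smul_smul, mul_assoc, mul_inv_cancel₀ (hn₁ i).ne', mul_one]
      have h2 : ∑ j', e₂ j' • (‖Φ₂ j'‖⁻¹ • Φ₂ j') = Φ₂ j := by
        rw [Finset.sum_eq_single j]
        · rw [he₂, Pi.single_eq_same, smul_smul, mul_inv_cancel₀ (hn₂ j).ne', one_smul]
        · intro b _ hb; rw [he₂, Pi.single_eq_of_ne hb, zero_smul]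
        · intro h; exact absurd (Finset.mem_univ j) h
      rw [h1, h2, hhat j, add_comm]
    have hcoef1 : ∑ i, e₁ i ^ 2 ≤ (k : ℝ) * (C ^ 2 * ‖Φ₂ j‖ ^ 2) := by
      rw [show ∑ i, e₁ i ^ 2 = ∑ i, (if i ∈ S j then (t j i * ‖Φ₁ i‖) ^ 2 else 0) from
        Finset.sum_congr rfl fun i _ => by by_cases h : i ∈ S j <;> simp [he₁, h]]
      rw [Finset.sum_ite_mem, Finset.univ_inter]
      calc ∑ i ∈ S j, (t j i * ‖Φ₁ i‖) ^ 2
          ≤ ∑ _i ∈ S j, C ^ 2 * ‖Φ₂ j‖ ^ 2 := by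
            refine Finset.sum_le_sum fun i hi => ?_
            have h := ht j i hi
            have h2 : (|t j i| * ‖Φ₁ i‖) ^ 2 ≤ (C * ‖Φ₂ j‖) ^ 2 := by
              apply pow_le_pow_left₀ (by positivity) h
            calc (t j i * ‖Φ₁ i‖) ^ 2 = (|t j i| * ‖Φ₁ i‖) ^ 2 := by
                  rw [mul_pow, mul_pow, sq_abs]
              _ ≤ (C * ‖Φ₂ j‖) ^ 2 := h2
              _ = C ^ 2 * ‖Φ₂ j‖ ^ 2 := by ring
        _ = (S j).card * (C ^ 2 * ‖Φ₂ j‖ ^ 2) := by rw [Finset.sum_const, nsmul_eq_mul]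
        _ ≤ (k : ℝ) * (C ^ 2 * ‖Φ₂ j‖ ^ 2) := by
            apply mul_le_mul_of_nonneg_right _ (by positivity)
            exact_mod_cast hScard j
    have hcoef2 : ∑ j', e₂ j' ^ 2 = ‖Φ₂ j‖ ^ 2 := by
      rw [Finset.sum_eq_single j]
      · rw [he₂, Pi.single_eq_same]
      · intro b _ hb; rw [he₂, Pi.single_eq_of_ne hb]; ring
      · intro h; exact absurd (Finset.mem_univ j) h
    obtain ⟨hl, hu⟩ := hR e₁ e₂
    rw [hvec] at hl hu
    have hsum1 : 0 ≤ ∑ i, e₁ i ^ 2 := Finset.sum_nonneg fun i _ => sq_nonneg _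
    constructor
    · calc A * ‖Φ₂ j‖ ^ 2 ≤ A * (∑ i, e₁ i ^ 2 + ∑ j', e₂ j' ^ 2) := by
            rw [hcoef2]; nlinarith
        _ ≤ ‖Φh j‖ ^ 2 := hl
    · calc ‖Φh j‖ ^ 2 ≤ B * (∑ i, e₁ i ^ 2 + ∑ j', e₂ j' ^ 2) := hu
        _ ≤ Q * ‖Φ₂ j‖ ^ 2 := by rw [hcoef2, hQdef]; nlinarith
  -- Step 2: transformed coefficients
  set a : ι₁ → ι₂ → ℝ := fun i j => if i ∈ S j then t j i * ‖Φ₁ i‖ / ‖Φh j‖ else 0 with hadef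
  set d₁ : ι₁ → ℝ := fun i => c₁ i + ∑ j, a i j * c₂ j with hd₁def
  set d₂ : ι₂ → ℝ := fun j => c₂ j * (‖Φ₂ j‖ / ‖Φh j‖) with hd₂def
  -- Step 3: the vector identity
  have perj : ∀ j, c₂ j • (‖Φh j‖⁻¹ • Φh j)
      = (∑ i, (a i j * c₂ j) • (‖Φ₁ i‖⁻¹ • Φ₁ i)) + d₂ j • (‖Φ₂ j‖⁻¹ • Φ₂ j) := by
    intro j
    have h2 : d₂ j • (‖Φ₂ j‖⁻¹ • Φ₂ j) = (c₂ j * ‖Φh j‖⁻¹) • Φ₂ j := by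
      rw [smul_smul]
      congr 1
      rw [hd₂def]
      field_simp [(hn₂ j).ne', (hnh j).ne']
    have h1 : ∑ i, (a i j * c₂ j) • (‖Φ₁ i‖⁻¹ • Φ₁ i)
        = ∑ i ∈ S j, (c₂ j * ‖Φh j‖⁻¹) • (t j i • Φ₁ i) := by
      rw [show ∑ i, (a i j * c₂ j) • (‖Φ₁ i‖⁻¹ • Φ₁ i)
          = ∑ i, (if i ∈ S j then (t j i * ‖Φ₁ i‖ / ‖Φh j‖ * c₂ j) • (‖Φ₁ i‖⁻¹ • Φ₁ i) else 0) from
        Finset.sum_congr rfl fun i _ => by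
          by_cases h : i ∈ S j
          · simp only [hadef, if_pos h]
          · simp [hadef, h]]
      rw [Finset.sum_ite_mem, Finset.univ_inter]
      refine Finset.sum_congr rfl fun i _ => ?_
      rw [smul_smul, smul_smul]
      congr 1
      field_simp [(hn₁ i).ne', (hnh j).ne']
    rw [h1, h2, hhat j, smul_smul, smul_add, Finset.smul_sum, add_comm]
  have hx : (∑ i, c₁ i • (‖Φ₁ i‖⁻¹ • Φ₁ i)) + ∑ j, c₂ j • (‖Φh j‖⁻¹ • Φh j)
      = (∑ i, d₁ i • (‖Φ₁ i‖⁻¹ • Φ₁ i)) + ∑ j, d₂ j • (‖Φ₂ j‖⁻¹ • Φ₂ j) := by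
    have e1 : ∑ j, c₂ j • (‖Φh j‖⁻¹ • Φh j)
        = (∑ i, (∑ j, a i j * c₂ j) • (‖Φ₁ i‖⁻¹ • Φ₁ i)) + ∑ j, d₂ j • (‖Φ₂ j‖⁻¹ • Φ₂ j) := by
      rw [Finset.sum_congr rfl fun j _ => perj j, Finset.sum_add_distrib]
      congr 1
      rw [Finset.sum_comm]
      exact Finset.sum_congr rfl fun i _ => (Finset.sum_smul).symm
    rw [e1, ← add_assoc]
    congr 1
    rw [← Finset.sum_add_distrib]
    exact Finset.sum_congr rfl fun i _ => (add_smul _ _ _).symm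
  -- bounds on entries of a
  have ha_sq : ∀ i j, i ∈ S j → (a i j) ^ 2 ≤ C ^ 2 / A := by
    intro i j hij
    have h1 : (a i j) ^ 2 * ‖Φh j‖ ^ 2 = (t j i * ‖Φ₁ i‖) ^ 2 := by
      simp only [hadef, if_pos hij]
      field_simp [(hnh j).ne']
    have h2 : (t j i * ‖Φ₁ i‖) ^ 2 ≤ C ^ 2 * ‖Φ₂ j‖ ^ 2 := by
      have h := ht j i hij
      have := pow_le_pow_left₀ (by positivity) h 2
      calc (t j i * ‖Φ₁ i‖) ^ 2 = (|t j i| * ‖Φ₁ i‖) ^ 2 := by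
            rw [mul_pow, mul_pow, sq_abs]
        _ ≤ (C * ‖Φ₂ j‖) ^ 2 := this
        _ = C ^ 2 * ‖Φ₂ j‖ ^ 2 := by ring
    have h3 := (key j).1
    have h4 : (0:ℝ) < ‖Φh j‖ ^ 2 := pow_pos (hnh j) 2
    rw [le_div_iff₀ hA]
    have h5 : (a i j) ^ 2 * A * ‖Φh j‖ ^ 2 ≤ C ^ 2 * ‖Φh j‖ ^ 2 := by nlinarith
    exact le_of_mul_le_mul_right h5 h4
  have ha_zero : ∀ i j, i ∉ S j → a i j = 0 := fun i j h => by simp [hadef, h]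
  have hcol : ∀ j, ∑ i, (a i j) ^ 2 ≤ (k:ℝ) * (C ^ 2 / A) := by
    intro j
    rw [show ∑ i, (a i j) ^ 2 = ∑ i, (if i ∈ S j then (a i j) ^ 2 else 0) from
      Finset.sum_congr rfl fun i _ => by by_cases h : i ∈ S j <;> simp [ha_zero i j, h]]
    rw [Finset.sum_ite_mem, Finset.univ_inter]
    calc ∑ i ∈ S j, (a i j) ^ 2 ≤ ∑ _i ∈ S j, C ^ 2 / A :=
          Finset.sum_le_sum fun i hi => ha_sq i j hi
      _ = (S j).card * (C ^ 2 / A) := by rw [Finset.sum_const, nsmul_eq_mul]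
      _ ≤ (k:ℝ) * (C ^ 2 / A) := by
          apply mul_le_mul_of_nonneg_right _ (div_nonneg (by positivity) hA.le)
          exact_mod_cast hScard j
  have hTcard : ∀ i, ((Finset.univ.filter (fun j => i ∈ S j)) : Finset ι₂).card ≤ k := by
    intro i
    have h := hT i
    rwa [Set.ncard_eq_toFinset_card', Set.toFinset_setOf] at h
  -- Step 4: Schur-type estimate
  set E : ℝ := ∑ i, (∑ j, a i j * c₂ j) ^ 2 with hEdef
  have hE : E ≤ K * ∑ j, (c₂ j) ^ 2 := by
    have per_i : ∀ i, (∑ j, a i j * c₂ j) ^ 2 ≤ (k:ℝ) * ∑ j, (a i j * c₂ j) ^ 2 := by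
      intro i
      set b : ι₂ → ℝ := fun j => if i ∈ S j then 1 else 0 with hbdef
      have hrw : ∑ j, a i j * c₂ j = ∑ j, b j * (a i j * c₂ j) := by
        refine Finset.sum_congr rfl fun j _ => ?_
        by_cases h : i ∈ S j
        · simp [hbdef, h]
        · simp [hbdef, h, ha_zero i j h]
      have hcs := Finset.sum_mul_sq_le_sq_mul_sq Finset.univ b (fun j => a i j * c₂ j)
      have hb2 : ∑ j, b j ^ 2 ≤ (k:ℝ) := by
        have heq : ∑ j, b j ^ 2 = ((Finset.univ.filter (fun j => i ∈ S j)).card : ℝ) := by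
          rw [show ∑ j, b j ^ 2 = ∑ j, (if i ∈ S j then (1:ℝ) else 0) from
            Finset.sum_congr rfl fun j _ => by by_cases h : i ∈ S j <;> simp [hbdef, h]]
          rw [Finset.sum_boole]
        rw [heq]
        exact_mod_cast hTcard i
      calc (∑ j, a i j * c₂ j) ^ 2 = (∑ j, b j * (a i j * c₂ j)) ^ 2 := by rw [hrw]
        _ ≤ (∑ j, b j ^ 2) * ∑ j, (a i j * c₂ j) ^ 2 := hcs
        _ ≤ (k:ℝ) * ∑ j, (a i j * c₂ j) ^ 2 :=
            mul_le_mul_of_nonneg_right hb2 (Finset.sum_nonneg fun j _ => sq_nonneg _)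
    have hdouble : ∑ i, ∑ j, (a i j * c₂ j) ^ 2 ≤ (k:ℝ) * (C ^ 2 / A) * ∑ j, (c₂ j) ^ 2 := by
      rw [Finset.sum_comm]
      calc ∑ j, ∑ i, (a i j * c₂ j) ^ 2 = ∑ j, (c₂ j) ^ 2 * ∑ i, (a i j) ^ 2 := by
            refine Finset.sum_congr rfl fun j _ => ?_
            rw [Finset.mul_sum]
            exact Finset.sum_congr rfl fun i _ => by ring
        _ ≤ ∑ j, (c₂ j) ^ 2 * ((k:ℝ) * (C ^ 2 / A)) := Finset.sum_le_sum fun j _ =>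
            mul_le_mul_of_nonneg_left (hcol j) (sq_nonneg _)
        _ = (k:ℝ) * (C ^ 2 / A) * ∑ j, (c₂ j) ^ 2 := by rw [← Finset.sum_mul]; ring
    calc E ≤ ∑ i, (k:ℝ) * ∑ j, (a i j * c₂ j) ^ 2 := Finset.sum_le_sum fun i _ => per_i i
      _ = (k:ℝ) * ∑ i, ∑ j, (a i j * c₂ j) ^ 2 := by rw [Finset.mul_sum]
      _ ≤ (k:ℝ) * ((k:ℝ) * (C ^ 2 / A) * ∑ j, (c₂ j) ^ 2) :=
          mul_le_mul_of_nonneg_left hdouble (Nat.cast_nonneg k)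
      _ = K * ∑ j, (c₂ j) ^ 2 := by rw [hKdef]; ring
  -- Step 5: coefficient comparisons
  have hsq : ∀ j, (d₂ j) ^ 2 * ‖Φh j‖ ^ 2 = (c₂ j) ^ 2 * ‖Φ₂ j‖ ^ 2 := by
    intro j
    simp only [hd₂def]
    field_simp [(hnh j).ne']
  have hd2_le : ∑ j, (d₂ j) ^ 2 ≤ 1 / A * ∑ j, (c₂ j) ^ 2 := by
    rw [Finset.mul_sum]
    refine Finset.sum_le_sum fun j _ => ?_
    have h1 := (key j).1
    have h2 := hsq j
    have h3 : (0:ℝ) < ‖Φ₂ j‖ ^ 2 := pow_pos (hn₂ j) 2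
    have h5 : (d₂ j) ^ 2 * A * ‖Φ₂ j‖ ^ 2 ≤ (c₂ j) ^ 2 * ‖Φ₂ j‖ ^ 2 := by
      calc (d₂ j) ^ 2 * A * ‖Φ₂ j‖ ^ 2 = (d₂ j) ^ 2 * (A * ‖Φ₂ j‖ ^ 2) := by ring
        _ ≤ (d₂ j) ^ 2 * ‖Φh j‖ ^ 2 := mul_le_mul_of_nonneg_left h1 (sq_nonneg _)
        _ = (c₂ j) ^ 2 * ‖Φ₂ j‖ ^ 2 := h2
    have h6 : (d₂ j) ^ 2 * A ≤ (c₂ j) ^ 2 := le_of_mul_le_mul_right h5 h3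
    rw [one_div_mul_eq_div, le_div_iff₀ hA]
    linarith
  have hc2_le : ∑ j, (c₂ j) ^ 2 ≤ Q * ∑ j, (d₂ j) ^ 2 := by
    rw [Finset.mul_sum]
    refine Finset.sum_le_sum fun j _ => ?_
    have h1 := (key j).2
    have h2 := hsq j
    have h3 : (0:ℝ) < ‖Φ₂ j‖ ^ 2 := pow_pos (hn₂ j) 2
    have h5 : (c₂ j) ^ 2 * ‖Φ₂ j‖ ^ 2 ≤ Q * (d₂ j) ^ 2 * ‖Φ₂ j‖ ^ 2 := by
      calc (c₂ j) ^ 2 * ‖Φ₂ j‖ ^ 2 = (d₂ j) ^ 2 * ‖Φh j‖ ^ 2 := h2.symm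
        _ ≤ (d₂ j) ^ 2 * (Q * ‖Φ₂ j‖ ^ 2) := mul_le_mul_of_nonneg_left h1 (sq_nonneg _)
        _ = Q * (d₂ j) ^ 2 * ‖Φ₂ j‖ ^ 2 := by ring
    exact le_of_mul_le_mul_right h5 h3
  have hd1_le : ∑ i, (d₁ i) ^ 2 ≤ 2 * ∑ i, (c₁ i) ^ 2 + 2 * E := by
    rw [hEdef, Finset.mul_sum, Finset.mul_sum, ← Finset.sum_add_distrib]
    refine Finset.sum_le_sum fun i _ => ?_
    simp only [hd₁def]
    nlinarith [sq_nonneg (c₁ i - ∑ j, a i j * c₂ j)]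
  have hc1_le : ∑ i, (c₁ i) ^ 2 ≤ 2 * ∑ i, (d₁ i) ^ 2 + 2 * E := by
    rw [hEdef, Finset.mul_sum, Finset.mul_sum, ← Finset.sum_add_distrib]
    refine Finset.sum_le_sum fun i _ => ?_
    simp only [hd₁def]
    nlinarith [sq_nonneg (c₁ i + 2 * ∑ j, a i j * c₂ j)]
  have hSc1 : 0 ≤ ∑ i, (c₁ i) ^ 2 := Finset.sum_nonneg fun i _ => sq_nonneg _
  have hSc2 : 0 ≤ ∑ j, (c₂ j) ^ 2 := Finset.sum_nonneg fun j _ => sq_nonneg _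
  have hSd1 : 0 ≤ ∑ i, (d₁ i) ^ 2 := Finset.sum_nonneg fun i _ => sq_nonneg _
  have hSd2 : 0 ≤ ∑ j, (d₂ j) ^ 2 := Finset.sum_nonneg fun j _ => sq_nonneg _
  have hEnn : 0 ≤ E := Finset.sum_nonneg fun i _ => sq_nonneg _
  obtain ⟨hl, hu⟩ := hR d₁ d₂
  rw [← hx] at hl hu
  constructor
  · have hsum : ∑ i, (c₁ i) ^ 2 + ∑ j, (c₂ j) ^ 2
        ≤ M * (∑ i, (d₁ i) ^ 2 + ∑ j, (d₂ j) ^ 2) := by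
      have f1 : 2 * K * ∑ j, (c₂ j) ^ 2 ≤ 2 * K * (Q * ∑ j, (d₂ j) ^ 2) :=
        mul_le_mul_of_nonneg_left hc2_le (by linarith)
      rw [hMdef]
      nlinarith [mul_nonneg (mul_nonneg (by linarith : (0:ℝ) ≤ 2*K+1) hQ) hSd1]
    calc A / M * (∑ i, (c₁ i) ^ 2 + ∑ j, (c₂ j) ^ 2)
        ≤ A / M * (M * (∑ i, (d₁ i) ^ 2 + ∑ j, (d₂ j) ^ 2)) :=
          mul_le_mul_of_nonneg_left hsum (div_pos hA hMpos).le
      _ = A * (∑ i, (d₁ i) ^ 2 + ∑ j, (d₂ j) ^ 2) := by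
          field_simp
      _ ≤ _ := hl
  · have hsum2 : ∑ i, (d₁ i) ^ 2 + ∑ j, (d₂ j) ^ 2
        ≤ (2 + 2 * K + 1 / A) * (∑ i, (c₁ i) ^ 2 + ∑ j, (c₂ j) ^ 2) := by
      nlinarith [mul_nonneg hK hSc1, mul_nonneg (by positivity : (0:ℝ) ≤ 1/A) hSc1]
    calc ‖(∑ i, c₁ i • (‖Φ₁ i‖⁻¹ • Φ₁ i)) + ∑ j, c₂ j • (‖Φh j‖⁻¹ • Φh j)‖ ^ 2
        ≤ B * (∑ i, (d₁ i) ^ 2 + ∑ j, (d₂ j) ^ 2) := hu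
      _ ≤ B * ((2 + 2 * K + 1 / A) * (∑ i, (c₁ i) ^ 2 + ∑ j, (c₂ j) ^ 2)) :=
          mul_le_mul_of_nonneg_left hsum2 hB.le
      _ = B * (2 + 2 * K + 1 / A) * (∑ i, (c₁ i) ^ 2 + ∑ j, (c₂ j) ^ 2) := by ring
end
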